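/- Let L = (S, Act, →) be a labelled transition system, σ a path in L, and π, π' ACTL* path formulas. Then L,σ ⊨ π U π' if and only if ks(L), ks(σ) ⊨ (F ⇒ ks(π)) U (F ∧ ks(π')). -/

import Mathlib

/-!
Statement 1: the until case of the truth-preservation theorem for the mapping `ks` from ACTL* (over labelled transition systems) to
CTL* (over Kripke structures) preserves truth:
`L,σ ⊨ φ` iff `ks(L), ks(σ) ⊨ ks(φ)`.
-/

namespace Stmt1

/-- A path in a labelled transition system with transition relation `Tr ⊆ S × Act × S`. -/
structure LPath {S Act : Type} (Tr : S → Act → S → Prop) where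
  states : ℕ → S
  acts : ℕ → Act
  valid : ∀ n, Tr (states n) (acts n) (states (n + 1))

/-- The suffix of a path, starting at position `k`. -/
def LPath.suffix {S Act : Type} {Tr : S → Act → S → Prop} (σ : LPath Tr) (k : ℕ) :
    LPath Tr where
  states n := σ.states (n + k)
  acts n := σ.acts (n + k)
  valid n := by
    have h := σ.valid (n + k)
    rwa [show n + k + 1 = n + 1 + k by omega] at h

/-- A path in a Kripke structure with transition relation `R ⊆ S × S`. -/
structure KPath {S : Type} (R : S → S → Prop) where
  states : ℕ → S
  valid : ∀ n, R (states n) (states (n + 1))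

/-- The suffix of a path in a Kripke structure, starting at position `k`. -/
def KPath.suffix {S : Type} {R : S → S → Prop} (σ : KPath R) (k : ℕ) : KPath R where
  states n := σ.states (n + k)
  valid n := by
    have h := σ.valid (n + k)
    rwa [show n + k + 1 = n + 1 + k by omega] at h

mutual
/-- ACTL* state formulas over actions `Act`:
`φ ::= true | ¬φ | φ∧φ' | ∃π`. -/
inductive ASF (Act : Type) : Type
  | tt : ASF Act
  | neg : ASF Act → ASF Act
  | and : ASF Act → ASF Act → ASF Act
  | ex : APF Act → ASF Act

/-- ACTL* path formulas over actions `Act`: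
`π ::= φ | ¬π | π∧π' | Xπ | X_a π | π U π'`. -/
inductive APF (Act : Type) : Type
  | state : ASF Act → APF Act
  | neg : APF Act → APF Act
  | and : APF Act → APF Act → APF Act
  | next : APF Act → APF Act
  | anext : Act → APF Act → APF Act
  | unt : APF Act → APF Act → APF Act
end

mutual
/-- Satisfaction of ACTL* state formulas at a state of an LTS. -/
def asatS {S Act : Type} (Tr : S → Act → S → Prop) : ASF Act → S → Prop
  | .tt, _ => True
  | .neg φ, s => ¬ asatS Tr φ s
  | .and φ ψ, s => asatS Tr φ s ∧ asatS Tr ψ s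
  | .ex π, s => ∃ σ : LPath Tr, σ.states 0 = s ∧ asatP Tr π σ

/-- Satisfaction of ACTL* path formulas on a path of an LTS. -/
def asatP {S Act : Type} (Tr : S → Act → S → Prop) : APF Act → LPath Tr → Prop
  | .state φ, σ => asatS Tr φ (σ.states 0)
  | .neg π, σ => ¬ asatP Tr π σ
  | .and π π', σ => asatP Tr π σ ∧ asatP Tr π' σ
  | .next π, σ => asatP Tr π (σ.suffix 1)
  | .anext a π, σ => σ.acts 0 = a ∧ asatP Tr π (σ.suffix 1)
  | .unt π π', σ => ∃ j, asatP Tr π' (σ.suffix j) ∧ ∀ i < j, asatP Tr π (σ.suffix i)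
end

mutual
/-- CTL* state formulas over atomic propositions `AP`:
`φ ::= true | p | ¬φ | φ∧φ' | ∃π`. -/
inductive CSF (AP : Type) : Type
  | tt : CSF AP
  | atom : AP → CSF AP
  | neg : CSF AP → CSF AP
  | and : CSF AP → CSF AP → CSF AP
  | ex : CPF AP → CSF AP

/-- CTL* path formulas over atomic propositions `AP`:
`π ::= φ | ¬π | π∧π' | Xπ | π U π'`. -/
inductive CPF (AP : Type) : Type
  | state : CSF AP → CPF AP
  | neg : CPF AP → CPF AP
  | and : CPF AP → CPF AP → CPF AP
  | next : CPF AP → CPF AP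
  | unt : CPF AP → CPF AP → CPF AP
end

mutual
/-- Satisfaction of CTL* state formulas at a state of a Kripke structure. -/
def csatS {S AP : Type} (R : S → S → Prop) (Lab : S → Set AP) : CSF AP → S → Prop
  | .tt, _ => True
  | .atom p, s => p ∈ Lab s
  | .neg φ, s => ¬ csatS R Lab φ s
  | .and φ ψ, s => csatS R Lab φ s ∧ csatS R Lab ψ s
  | .ex π, s => ∃ σ : KPath R, σ.states 0 = s ∧ csatP R Lab π σ

/-- Satisfaction of CTL* path formulas on a path of a Kripke structure. -/
def csatP {S AP : Type} (R : S → S → Prop) (Lab : S → Set AP) : CPF AP → KPath R → Prop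
  | .state φ, σ => csatS R Lab φ (σ.states 0)
  | .neg π, σ => ¬ csatP R Lab π σ
  | .and π π', σ => csatP R Lab π σ ∧ csatP R Lab π' σ
  | .next π, σ => csatP R Lab π (σ.suffix 1)
  | .unt π π', σ => ∃ j, csatP R Lab π' (σ.suffix j) ∧ ∀ i < j, csatP R Lab π (σ.suffix i)
end

section ksConstruction

variable {S Act : Type} (Tr : S → Act → S → Prop)

/-- States of the Kripke structure `ks(L)`: the states of `L` together with one fresh
state for each transition of `L`. -/
abbrev KState := S ⊕ {t : S × Act × S // Tr t.1 t.2.1 t.2.2}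

/-- The fresh atomic proposition `F` (the atomic propositions of `ks(L)` are `Act ∪ {F}`). -/
def Fprop : Act ⊕ Unit := Sum.inr ()

/-- Transitions of `ks(L)`: for every transition `(s₀, α, s₁)` of `L`, the new state
`(s₀, α, s₁)` sits between `s₀` and `s₁`. -/
def KTrans : KState Tr → KState Tr → Prop
  | .inl s, .inr t => t.1.1 = s
  | .inr t, .inl s => t.1.2.2 = s
  | _, _ => False

/-- Labelling of `ks(L)`: original states are labelled `{F}`, the state corresponding to a
transition `(s₀, α, s₁)` is labelled `{α}`. -/
def KLab : KState Tr → Set (Act ⊕ Unit)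
  | .inl _ => {Sum.inr ()}
  | .inr t => {Sum.inl t.1.2.1}

/-- The path `ks(σ)` in `ks(L)` induced by a path `σ` in `L`: between consecutive states of
`σ` the corresponding transition-state is inserted. -/
def ksPath (σ : LPath Tr) : KPath (KTrans Tr) where
  states n :=
    if n % 2 = 0 then Sum.inl (σ.states (n / 2))
    else Sum.inr ⟨(σ.states (n / 2), σ.acts (n / 2), σ.states (n / 2 + 1)), σ.valid (n / 2)⟩
  valid n := by
    rcases Nat.even_or_odd n with ⟨k, hk⟩ | ⟨k, hk⟩
    · have h1 : n % 2 = 0 := by omega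
      have h2 : ¬ (n + 1) % 2 = 0 := by omega
      have h3 : (n + 1) / 2 = n / 2 := by omega
      simp only [h1, h2, if_true, if_false, h3, KTrans]
    · have h1 : ¬ n % 2 = 0 := by omega
      have h2 : (n + 1) % 2 = 0 := by omega
      have h3 : (n + 1) / 2 = n / 2 + 1 := by omega
      simp only [h1, h2, if_true, if_false, h3, KTrans]

end ksConstruction

/-- The atomic proposition `F`, as a CTL* path formula. -/
def Fpf (Act : Type) : CPF (Act ⊕ Unit) := .state (.atom (Sum.inr ()))

mutual
/-- The translation `ks` from ACTL* state formulas to CTL* state formulas. -/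
def ksS {Act : Type} : ASF Act → CSF (Act ⊕ Unit)
  | .tt => .tt
  | .neg φ => .neg (ksS φ)
  | .and φ ψ => .and (ksS φ) (ksS ψ)
  | .ex π => .ex (ksP π)

/-- The translation `ks` from ACTL* path formulas to CTL* path formulas.
(Implication `F ⇒ ψ` is expressed as `¬(F ∧ ¬ψ)`.) -/
def ksP {Act : Type} : APF Act → CPF (Act ⊕ Unit)
  | .state φ => .state (ksS φ)
  | .neg π => .neg (ksP π)
  | .and π π' => .and (ksP π) (ksP π')
  | .next π => .next (.next (ksP π))
  | .anext a π => .and (.next (.state (.atom (Sum.inl a)))) (.next (.next (ksP π)))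
  | .unt π π' =>
      .unt (.neg (.and (Fpf Act) (.neg (ksP π)))) (.and (Fpf Act) (ksP π'))
end

section Aux

variable {S Act : Type} {Tr : S → Act → S → Prop}

theorem KPath.ext' {S : Type} {R : S → S → Prop} {ρ ρ' : KPath R}
    (h : ∀ n, ρ.states n = ρ'.states n) : ρ = ρ' := by
  cases ρ; cases ρ'
  simp only [KPath.mk.injEq]
  exact funext h

theorem LPath.suffix_states (σ : LPath Tr) (k n : ℕ) :
    (σ.suffix k).states n = σ.states (n + k) := rfl

theorem ksPath_states_even (σ : LPath Tr) (k : ℕ) :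
    (ksPath Tr σ).states (2 * k) = Sum.inl (σ.states k) := by
  simp [ksPath, Nat.mul_mod_right, Nat.mul_div_cancel_left]

theorem ksPath_suffix (σ : LPath Tr) (k : ℕ) :
    (ksPath Tr σ).suffix (2 * k) = ksPath Tr (σ.suffix k) := by
  apply KPath.ext'
  intro n
  show (ksPath Tr σ).states (n + 2 * k) = (ksPath Tr (σ.suffix k)).states n
  simp only [ksPath, LPath.suffix]
  have h1 : (n + 2 * k) % 2 = n % 2 := by omega
  rcases Nat.even_or_odd n with ⟨m, hm⟩ | ⟨m, hm⟩
  · have e1 : (n + 2 * k) % 2 = 0 := by omega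
    have e2 : n % 2 = 0 := by omega
    have e3 : (n + 2 * k) / 2 = n / 2 + k := by omega
    simp [e1, e2, e3]
  · have e1 : ¬ (n + 2 * k) % 2 = 0 := by omega
    have e2 : ¬ n % 2 = 0 := by omega
    have e3 : (n + 2 * k) / 2 = n / 2 + k := by omega
    simp only [e1, e2, if_false, e3]
    congr 1
    apply Subtype.ext
    show (σ.states (n / 2 + k), σ.acts (n / 2 + k), σ.states (n / 2 + k + 1)) =
      (σ.states (n / 2 + k), σ.acts (n / 2 + k), σ.states (n / 2 + 1 + k))
    rw [show n / 2 + 1 + k = n / 2 + k + 1 from by omega]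

theorem ksPath_decode (ρ : KPath (KTrans Tr)) (s : S) (h : ρ.states 0 = Sum.inl s) :
    ∃ σ : LPath Tr, σ.states 0 = s ∧ ksPath Tr σ = ρ := by
  have H : ∀ n, ∃ t : {t : S × Act × S // Tr t.1 t.2.1 t.2.2},
      ρ.states (2 * n) = Sum.inl t.1.1 ∧ ρ.states (2 * n + 1) = Sum.inr t := by
    have base : ∀ n, (∃ s', ρ.states (2 * n) = Sum.inl s') → ∃ t,
        ρ.states (2 * n) = Sum.inl t.1.1 ∧ ρ.states (2 * n + 1) = Sum.inr t ∧
        ρ.states (2 * n + 2) = Sum.inl t.1.2.2 := by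
      intro n ⟨s', hs'⟩
      have v1 := ρ.valid (2 * n)
      have v2 := ρ.valid (2 * n + 1)
      rw [hs'] at v1
      rcases ht : ρ.states (2 * n + 1) with s'' | t
      · rw [ht] at v1; exact absurd v1 (by simp [KTrans])
      · rw [ht] at v1 v2
        rcases ht2 : ρ.states (2 * n + 2) with s3 | t3
        · rw [ht2] at v2
          simp only [KTrans] at v1 v2
          exact ⟨t, by rw [hs', v1], rfl, by rw [v2]⟩
          
        · rw [ht2] at v2; exact absurd v2 (by simp [KTrans])
    intro n
    induction n with
    | zero => obtain ⟨t, h1, h2, _⟩ := base 0 ⟨s, by simpa using h⟩; exact ⟨t, h1, h2⟩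
    | succ m ih =>
      obtain ⟨t, h1, h2⟩ := ih
      obtain ⟨t', _, h2', h3'⟩ := base m ⟨t.1.1, h1⟩
      have : t' = t := by
        have := h2.symm.trans h2'
        exact Sum.inr.inj this.symm
      rw [this] at h3'
      obtain ⟨t2, g1, g2, _⟩ := base (m + 1) ⟨t.1.2.2, by
        have : 2 * (m + 1) = 2 * m + 2 := by ring
        rw [this]; exact h3'⟩
      exact ⟨t2, g1, g2⟩
  choose t ht1 ht2 using H
  have link : ∀ n, (t n).1.2.2 = (t (n + 1)).1.1 := by
    intro n
    have v := ρ.valid (2 * n + 1)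
    rw [ht2 n] at v
    have : 2 * n + 1 + 1 = 2 * (n + 1) := by ring
    rw [this, ht1 (n + 1)] at v
    simpa [KTrans] using v
  refine ⟨⟨fun n => (t n).1.1, fun n => (t n).1.2.1, fun n => ?_⟩, ?_, ?_⟩
  · show Tr (t n).1.1 (t n).1.2.1 (t (n + 1)).1.1
    rw [← link n]; exact (t n).2
  · have := (ht1 0).symm.trans (by simpa using h)
    exact Sum.inl.inj this
  · apply KPath.ext'
    intro n
    simp only [ksPath]
    rcases Nat.even_or_odd n with ⟨m, hm⟩ | ⟨m, hm⟩
    · have e : n % 2 = 0 := by omega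
      have e2 : n = 2 * (n / 2) := by omega
      simp only [e, if_true]
      rw [show ρ.states n = ρ.states (2 * (n / 2)) by rw [← e2], ht1]
    · have e : ¬ n % 2 = 0 := by omega
      have e2 : n = 2 * (n / 2) + 1 := by omega
      simp only [e, if_false]
      rw [show ρ.states n = ρ.states (2 * (n / 2) + 1) by rw [← e2], ht2]
      congr 1
      apply Subtype.ext
      have l := link (n / 2)
      ext <;> simp [l]

theorem KPath.suffix_states0 {S : Type} {R : S → S → Prop} (ρ : KPath R) (k : ℕ) :
    (ρ.suffix k).states 0 = ρ.states k := by
  show ρ.states (0 + k) = ρ.states k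
  rw [Nat.zero_add]

theorem F_at (σ : LPath Tr) (j : ℕ) :
    (Sum.inr () : Act ⊕ Unit) ∈ KLab Tr ((ksPath Tr σ).states j) ↔ j % 2 = 0 := by
  by_cases h : j % 2 = 0
  · have : (ksPath Tr σ).states j = Sum.inl (σ.states (j / 2)) := by simp [ksPath, h]
    rw [this]
    simp [KLab, h]
  · have : (ksPath Tr σ).states j =
        Sum.inr ⟨(σ.states (j / 2), σ.acts (j / 2), σ.states (j / 2 + 1)), σ.valid (j / 2)⟩ := by
      simp [ksPath, h]
    rw [this]
    constructor
    · intro hmem; exact absurd hmem (by simp [KLab])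
    · intro hj; exact absurd hj h

mutual
theorem presS {S Act : Type} (Tr : S → Act → S → Prop) (φ : ASF Act) (s : S) :
    asatS Tr φ s ↔ csatS (KTrans Tr) (KLab Tr) (ksS φ) (Sum.inl s) := by
  match φ with
  | .tt => simp [asatS, csatS, ksS]
  | .neg φ =>
    simp only [asatS, csatS, ksS]
    exact not_congr (presS Tr φ s)
  | .and φ ψ =>
    simp only [asatS, csatS, ksS]
    exact and_congr (presS Tr φ s) (presS Tr ψ s)
  | .ex π =>
    simp only [asatS, csatS, ksS]
    constructor
    · rintro ⟨σ, h0, hπ⟩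
      refine ⟨ksPath Tr σ, ?_, (presP Tr π σ).mp hπ⟩
      have := ksPath_states_even σ 0
      simpa [h0] using this
    · rintro ⟨ρ, h0, hπ⟩
      obtain ⟨σ, hs0, hks⟩ := ksPath_decode ρ s h0
      refine ⟨σ, hs0, (presP Tr π σ).mpr ?_⟩
      rw [hks]; exact hπ

theorem presP {S Act : Type} (Tr : S → Act → S → Prop) (π : APF Act) (σ : LPath Tr) :
    asatP Tr π σ ↔ csatP (KTrans Tr) (KLab Tr) (ksP π) (ksPath Tr σ) := by
  match π with
  | .state φ =>
    simp only [asatP, csatP, ksP]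
    have h0 : (ksPath Tr σ).states 0 = Sum.inl (σ.states 0) := by
      have := ksPath_states_even σ 0; simpa using this
    rw [h0]
    exact presS Tr φ (σ.states 0)
  | .neg π =>
    simp only [asatP, csatP, ksP]
    exact not_congr (presP Tr π σ)
  | .and π π' =>
    simp only [asatP, csatP, ksP]
    exact and_congr (presP Tr π σ) (presP Tr π' σ)
  | .next π =>
    simp only [asatP, csatP, ksP]
    have h : ((ksPath Tr σ).suffix 1).suffix 1 = ksPath Tr (σ.suffix 1) := by
      rw [← ksPath_suffix]
      apply KPath.ext'
      intro n
      show (ksPath Tr σ).states (n + 1 + 1) = (ksPath Tr σ).states (n + 2 * 1)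
      congr 1
    rw [h]
    exact presP Tr π (σ.suffix 1)
  | .anext a π =>
    simp only [asatP, csatP, ksP]
    have h : ((ksPath Tr σ).suffix 1).suffix 1 = ksPath Tr (σ.suffix 1) := by
      rw [← ksPath_suffix]
      apply KPath.ext'
      intro n
      show (ksPath Tr σ).states (n + 1 + 1) = (ksPath Tr σ).states (n + 2 * 1)
      congr 1
    rw [h]
    have h1 : ((ksPath Tr σ).suffix 1).states 0 = (ksPath Tr σ).states 1 := rfl
    have h2 : (ksPath Tr σ).states 1 =
        Sum.inr ⟨(σ.states 0, σ.acts 0, σ.states 1), σ.valid 0⟩ := by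
      simp [ksPath]
    rw [h1, h2]
    simp only [csatP, csatS, KLab, Set.mem_singleton_iff]
    constructor
    · rintro ⟨h, h'⟩; exact ⟨by rw [h], (presP Tr π (σ.suffix 1)).mp h'⟩
    · rintro ⟨h, h'⟩
      exact ⟨(Sum.inl.inj h).symm, (presP Tr π (σ.suffix 1)).mpr h'⟩
  | .unt π π' =>
    simp only [asatP, csatP, ksP]
    constructor
    · rintro ⟨j, hj, hlt⟩
      refine ⟨2 * j, ?_, ?_⟩
      · constructor
        · show (Sum.inr () : Act ⊕ Unit) ∈ KLab Tr (((ksPath Tr σ).suffix (2 * j)).states 0)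
          rw [KPath.suffix_states0]
          rw [F_at]; omega
        · rw [ksPath_suffix]
          exact (presP Tr π' (σ.suffix j)).mp hj
      · intro i hi hcon
        obtain ⟨hF, hnπ⟩ := hcon
        have hFi : i % 2 = 0 := by
          simp only [Fpf, csatP, csatS] at hF
          rw [KPath.suffix_states0] at hF
          exact (F_at σ i).mp hF
        have : i = 2 * (i / 2) := by omega
        apply hnπ
        rw [this, ksPath_suffix]
        exact (presP Tr π (σ.suffix (i / 2))).mp (hlt (i / 2) (by omega))
    · rintro ⟨j, ⟨hF, hπ'⟩, hlt⟩
      have hFj : j % 2 = 0 := by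
        simp only [Fpf, csatP, csatS] at hF
        rw [KPath.suffix_states0] at hF
        exact (F_at σ j).mp hF
      refine ⟨j / 2, ?_, ?_⟩
      · apply (presP Tr π' (σ.suffix (j / 2))).mpr
        rw [← ksPath_suffix, show 2 * (j / 2) = j by omega]
        exact hπ'
      · intro i hi
        have h := hlt (2 * i) (by omega)
        apply (presP Tr π (σ.suffix i)).mpr
        by_contra hc
        apply h
        constructor
        · show (Sum.inr () : Act ⊕ Unit) ∈ KLab Tr (((ksPath Tr σ).suffix (2 * i)).states 0)
          rw [KPath.suffix_states0]
          rw [F_at]; omega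
        · rw [ksPath_suffix]; exact hc
end

end Aux

/-- Let `L` be an LTS, `σ` a path in `L`, and `π, π'` ACTL* path
formulas. Then `L,σ ⊨ π U π'` iff
`ks(L), ks(σ) ⊨ (F ⇒ ks(π)) U (F ∧ ks(π'))`. -/
theorem ks_preserves_until {S Act : Type} (Tr : S → Act → S → Prop)
    (σ : LPath Tr) (π π' : APF Act) :
    asatP Tr (.unt π π') σ ↔
      csatP (KTrans Tr) (KLab Tr)
        (.unt (.neg (.and (Fpf Act) (.neg (ksP π)))) (.and (Fpf Act) (ksP π')))
        (ksPath Tr σ) := by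
  have := presP Tr (.unt π π') σ
  simpa [ksP] using this

end Stmt1
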